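/- Let M ≥ 0 and let B be a positive contraction on ℓ_2 with B = P_M B P_M. Suppose that ‖B‖ = 1 and that the adjoint B* has a positive norming vector u ∈ E_M with Supp(u) = {0, …, M}. Then for every ε > 0 there exists δ > 0 such that: for every positive contraction T on ℓ_2, if max_{0 ≤ k, l ≤ M} |⟨e_k, (T − B)e_l⟩| < δ, then max_{0 ≤ k ≤ M} ‖(T − B)* e_k‖ < ε. -/

import Mathlib

open scoped ENNReal

noncomputable section

/-- The Hilbert space `ℓ₂` of square-summable complex sequences. -/
abbrev L2 := lp (fun _ : ℕ => ℂ) 2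

/-- A vector of `ℓ₂` is positive if all its coordinates are nonnegative reals. -/
def PosVec (x : L2) : Prop := ∀ n : ℕ, 0 ≤ (x n).re ∧ (x n).im = 0

/-- The set `𝒫₁(ℓ₂)` of positive contractions on `ℓ₂`. -/
def P1 : Set (L2 →L[ℂ] L2) :=
  {T | (∀ x : L2, PosVec x → PosVec (T x)) ∧ ‖T‖ ≤ 1}

/-- The strong operator topology (pointwise norm-convergence). -/
def sot : TopologicalSpace (L2 →L[ℂ] L2) :=
  TopologicalSpace.induced (fun T => (fun x : L2 => T x)) Pi.topologicalSpace

/-- The weak operator topology (pointwise weak convergence). -/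
def wot : TopologicalSpace (L2 →L[ℂ] L2) :=
  TopologicalSpace.induced
    (fun T => (fun q : L2 × L2 => (inner ℂ q.1 (T q.2) : ℂ)))
    Pi.topologicalSpace

/-- The dual strong operator topology `SOT_*` (pointwise norm-convergence of the adjoints). -/
def sotStar : TopologicalSpace (L2 →L[ℂ] L2) :=
  TopologicalSpace.induced
    (fun T => (fun x : L2 => (ContinuousLinearMap.adjoint T) x))
    Pi.topologicalSpace

/-- The `SOT*` topology, the join of `SOT` and `SOT_*`.  (In the order on
`TopologicalSpace`, `⊓` is the coarsest topology refining both.) -/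
def sotSStar : TopologicalSpace (L2 →L[ℂ] L2) := sot ⊓ sotStar

/-- Restriction of a topology to a subset. -/
def rtop {α : Type*} (s : Set α) (t : TopologicalSpace α) : TopologicalSpace ↥s :=
  t.induced Subtype.val

/-- Two topologies on the same set are similar if they have the same dense sets. -/
def SimilarTop {Y : Type*} (t t' : TopologicalSpace Y) : Prop :=
  ∀ A : Set Y, @Dense Y t A ↔ @Dense Y t' A

/-- The canonical basis vector `e_n` of `ℓ₂`. -/
def e (n : ℕ) : L2 := lp.single 2 n (1 : ℂ)

namespace Aux

lemma norm_sq_eq (x : L2) : ‖x‖ ^ 2 = ∑' j, ‖x j‖ ^ 2 := by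
  have h2 : (0:ℝ) < (2:ℝ≥0∞).toReal := by norm_num
  have := lp.norm_rpow_eq_tsum (p := 2) (E := fun _ : ℕ => ℂ) h2 x
  norm_num at this
  simpa using this

lemma summable_sq (x : L2) : Summable (fun j => ‖x j‖ ^ 2) := by
  have h2 : (0:ℝ) < (2:ℝ≥0∞).toReal := by norm_num
  have := (lp.memℓp x).summable h2
  norm_num at this
  simpa using this

lemma inner_e (x : L2) (k : ℕ) : (inner ℂ (e k) x : ℂ) = x k := by
  rw [e, lp.inner_single_left]
  simp [RCLike.inner_apply]

lemma e_apply (n j : ℕ) : (e n : L2) j = if j = n then 1 else 0 := by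
  rcases eq_or_ne j n with h | h
  · simp [e, h, lp.single_apply_self]
  · simp [e, lp.single_apply_ne _ _ _ h, h]

lemma posVec_e (n : ℕ) : PosVec (e n) := by
  intro j
  rw [e_apply]
  rcases eq_or_ne j n with h | h <;> simp [h]

lemma coord_adjoint (A : L2 →L[ℂ] L2) (x : L2) (j : ℕ) :
    ((ContinuousLinearMap.adjoint A) x) j = inner ℂ (A (e j)) x := by
  rw [← inner_e ((ContinuousLinearMap.adjoint A) x) j,
    ContinuousLinearMap.adjoint_inner_right]

lemma inner_finsupp (v u : L2) (M : ℕ) (hu : ∀ j, M < j → u j = 0) :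
    (inner ℂ v u : ℂ) = ∑ k ∈ Finset.range (M+1), (starRingEnd ℂ) (v k) * u k := by
  rw [lp.inner_eq_tsum]
  rw [tsum_eq_sum (s := Finset.range (M+1))]
  · exact Finset.sum_congr rfl fun k _ => by simp [RCLike.inner_apply, mul_comm]
  · intro b hb
    have : M < b := by simpa [Nat.lt_succ_iff, not_lt] using hb
    simp [RCLike.inner_apply, hu b this]

lemma norm_of_nonneg_real {z : ℂ} (h1 : z.im = 0) (h2 : 0 ≤ z.re) : ‖z‖ = z.re := by
  have hz : z = (z.re : ℂ) := Complex.ext rfl (by simp [h1])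
  rw [hz, Complex.norm_real]
  simp [abs_of_nonneg h2]

lemma split_sq (M : ℕ) (x : L2) :
    ‖x‖ ^ 2 = (∑ j ∈ Finset.range (M+1), ‖x j‖ ^ 2)
      + ∑' j : ((Finset.range (M+1) : Set ℕ)ᶜ : Set ℕ), ‖x (j:ℕ)‖ ^ 2 := by
  rw [norm_sq_eq]
  rw [← Summable.tsum_add_tsum_compl (s := ((Finset.range (M+1) : Finset ℕ) : Set ℕ))
    ((summable_sq x).subtype _) ((summable_sq x).subtype _)]
  congr 1
  simpa using Finset.tsum_subtype (Finset.range (M+1)) (fun j => ‖x j‖ ^ 2)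

end Aux

namespace Aux

def headVec (M : ℕ) (x : L2) : EuclideanSpace ℂ (Fin (M+1)) := WithLp.toLp 2 (fun i => x i)

lemma headVec_norm_sq (M : ℕ) (x : L2) :
    ‖headVec M x‖ ^ 2 = ∑ j ∈ Finset.range (M+1), ‖x j‖ ^ 2 := by
  rw [EuclideanSpace.norm_eq, Real.sq_sqrt (by positivity),
    ← Fin.sum_univ_eq_sum_range (fun j => ‖x j‖ ^ 2) (M+1)]
  rfl

end Aux



set_option maxHeartbeats 2000000 in
/-- Let `M ≥ 0` and let `B` be a positive contraction on `ℓ₂` with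
`B = P_M B P_M`.  Suppose that `‖B‖ = 1` and that `B*` has a positive norming vector
`u ∈ E_M` with `Supp(u) = {0, …, M}`.  Then for every `ε > 0` there exists `δ > 0` such
that for every positive contraction `T` on `ℓ₂`, if
`max_{0 ≤ k,l ≤ M} |⟨e_k, (T − B)e_l⟩| < δ` then `max_{0 ≤ k ≤ M} ‖(T − B)* e_k‖ < ε`. -/
theorem wot_close_implies_adjoint_sot_close_of_norming
    (M : ℕ) (B : L2 →L[ℂ] L2) (hB : B ∈ P1)
    (hRange : ∀ x : L2, ∀ j : ℕ, M < j → (B x) j = 0)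
    (hVanish : ∀ x : L2, (∀ j : ℕ, j ≤ M → x j = 0) → B x = 0)
    (hBnorm : ‖B‖ = 1)
    (u : L2) (hupos : PosVec u) (hune : u ≠ 0)
    (husupp₁ : ∀ j : ℕ, M < j → u j = 0)
    (husupp₂ : ∀ j : ℕ, j ≤ M → u j ≠ 0)
    (hunorming : ‖(ContinuousLinearMap.adjoint B) u‖ = ‖ContinuousLinearMap.adjoint B‖ * ‖u‖) :
    ∀ ε > (0 : ℝ), ∃ δ > (0 : ℝ), ∀ T : L2 →L[ℂ] L2, T ∈ P1 →
      (∀ k l : ℕ, k ≤ M → l ≤ M →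
        ‖(inner ℂ (e k) ((T - B) (e l)) : ℂ)‖ < δ) →
      (∀ k : ℕ, k ≤ M → ‖(ContinuousLinearMap.adjoint (T - B)) (e k)‖ < ε) := by
  intro ε hε
  have hune' : (0:ℝ) < ‖u‖ := norm_pos_iff.mpr hune
  have hrne : (Finset.range (M+1)).Nonempty := ⟨0, by simp⟩
  have hure : ∀ k, ‖u k‖ = (u k).re := fun k =>
    Aux.norm_of_nonneg_real (hupos k).2 (hupos k).1
  set m : ℝ := (Finset.range (M+1)).inf' hrne (fun k => (u k).re) with hmdef
  have hmle : ∀ k ∈ Finset.range (M+1), m ≤ (u k).re := fun k hk =>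
    Finset.inf'_le _ hk
  have hmpos : 0 < m := by
    rw [hmdef, Finset.lt_inf'_iff]
    intro k hk
    have hkM : k ≤ M := by simpa [Nat.lt_succ_iff] using hk
    rcases hupos k with ⟨h1, h2⟩
    rcases h1.lt_or_eq with h | h
    · exact h
    · exact absurd (Complex.ext h.symm h2) (husupp₂ k hkM)
  set S : ℝ := ∑ k ∈ Finset.range (M+1), (u k).re with hSdef
  have hSnn : 0 ≤ S := Finset.sum_nonneg fun k _ => (hupos k).1
  set C : ℝ := Real.sqrt (M+1) * S with hCdef
  have hCnn : 0 ≤ C := mul_nonneg (Real.sqrt_nonneg _) hSnn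
  set K : ℝ := ((M:ℝ)+1) + 2*‖u‖*C/m^2 with hKdef
  have hKpos : 0 < K := by positivity
  refine ⟨min 1 (min (‖u‖/(C+1)) (ε^2/(K+1))), by positivity, ?_⟩
  set δ : ℝ := min 1 (min (‖u‖/(C+1)) (ε^2/(K+1))) with hδdef
  have hδpos : 0 < δ := by rw [hδdef]; positivity
  intro T hT hcorner k hk
  -- abbreviations
  set tu : L2 := (ContinuousLinearMap.adjoint T) u with htu_def
  set bu : L2 := (ContinuousLinearMap.adjoint B) u with hbu_def
  set w : L2 := (ContinuousLinearMap.adjoint (T - B)) u with hw_def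
  set dk : L2 := (ContinuousLinearMap.adjoint (T - B)) (e k) with hdk_def
  have htuj : ∀ j, tu j = inner ℂ (T (e j)) u := fun j => Aux.coord_adjoint _ _ _
  have hbuj : ∀ j, bu j = inner ℂ (B (e j)) u := fun j => Aux.coord_adjoint _ _ _
  have hwj : ∀ j, w j = inner ℂ ((T - B) (e j)) u := fun j => Aux.coord_adjoint _ _ _
  have hdkj : ∀ j, dk j = inner ℂ ((T - B) (e j)) (e k) := fun j => Aux.coord_adjoint _ _ _
  have hBej : ∀ j, M < j → B (e j) = 0 := by
    intro j hj
    refine hVanish _ fun i hi => ?_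
    rw [Aux.e_apply]
    exact if_neg (by omega)
  have hTBj : ∀ j, M < j → (T - B) (e j) = T (e j) := fun j hj => by
    rw [ContinuousLinearMap.sub_apply, hBej j hj, sub_zero]
  have hcorner' : ∀ k' l', k' ≤ M → l' ≤ M → ‖((T - B) (e l') : L2) k'‖ ≤ δ := by
    intro k' l' h1 h2
    have h3 : (inner ℂ (e k') ((T - B) (e l')) : ℂ) = ((T - B) (e l') : L2) k' :=
      Aux.inner_e _ _
    rw [← h3]
    exact (hcorner k' l' h1 h2).le
  -- Step A : coordinates of w on the head
  have hA : ∀ j ∈ Finset.range (M+1), ‖w j‖ ≤ S * δ := by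
    intro j hj
    have hjM : j ≤ M := by simpa [Nat.lt_succ_iff] using hj
    rw [hwj j, Aux.inner_finsupp _ _ M husupp₁]
    calc ‖∑ k' ∈ Finset.range (M+1),
            (starRingEnd ℂ) (((T - B) (e j) : L2) k') * u k'‖
        ≤ ∑ k' ∈ Finset.range (M+1),
            ‖(starRingEnd ℂ) (((T - B) (e j) : L2) k') * u k'‖ := norm_sum_le _ _
      _ ≤ ∑ k' ∈ Finset.range (M+1), δ * (u k').re := by
          refine Finset.sum_le_sum fun k' hk' => ?_
          have hk'M : k' ≤ M := by simpa [Nat.lt_succ_iff] using hk'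
          rw [norm_mul, RCLike.norm_conj, hure k']
          exact mul_le_mul (hcorner' k' j hk'M hjM) le_rfl (hupos k').1
            hδpos.le
      _ = S * δ := by rw [← Finset.mul_sum, ← hSdef]; ring
  -- Step B : head of w is small
  have hB2 : ∑ j ∈ Finset.range (M+1), ‖w j‖ ^ 2 ≤ (C*δ)^2 := by
    calc ∑ j ∈ Finset.range (M+1), ‖w j‖ ^ 2
        ≤ ∑ _j ∈ Finset.range (M+1), (S*δ)^2 :=
          Finset.sum_le_sum fun j hj => pow_le_pow_left₀ (norm_nonneg _) (hA j hj) 2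
      _ = ((M:ℝ)+1) * (S*δ)^2 := by
          rw [Finset.sum_const, Finset.card_range, nsmul_eq_mul]; push_cast; ring
      _ = (C*δ)^2 := by
          rw [hCdef, mul_pow, mul_pow, mul_pow,
            Real.sq_sqrt (by positivity : (0:ℝ) ≤ (M:ℝ)+1)]
          ring
  -- tail coordinates of bu vanish
  have hbu0 : ∀ j, M < j → bu j = 0 := fun j hj => by
    rw [hbuj j, hBej j hj]; simp
  -- w = tu - bu coordinatewise
  have hw_coord : ∀ j, w j = tu j - bu j := fun j => by
    rw [hwj j, htuj j, hbuj j, ContinuousLinearMap.sub_apply, inner_sub_left]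
  -- ‖bu‖ = ‖u‖
  have hbunorm : ‖bu‖ = ‖u‖ := by
    rw [hbu_def, hunorming, ContinuousLinearMap.adjoint.norm_map, hBnorm, one_mul]
  have hbu_head : ∑ j ∈ Finset.range (M+1), ‖bu j‖ ^ 2 = ‖u‖ ^ 2 := by
    rw [← hbunorm, Aux.norm_sq_eq]
    refine (tsum_eq_sum fun j hj => ?_).symm
    have hjM : M < j := by simpa [Nat.lt_succ_iff, not_lt] using hj
    rw [hbu0 j hjM]; simp
  -- reverse triangle inequality on heads
  have hhead_sub : Aux.headVec M bu = Aux.headVec M tu - Aux.headVec M w := by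
    ext i
    have := hw_coord (i : ℕ)
    simp [Aux.headVec, this]
  have hbu_hv : ‖Aux.headVec M bu‖ = ‖u‖ := by
    have h := Aux.headVec_norm_sq M bu
    rw [hbu_head] at h
    rw [← Real.sqrt_sq (norm_nonneg (Aux.headVec M bu)), h,
      Real.sqrt_sq (norm_nonneg u)]
  have hw_hv : ‖Aux.headVec M w‖ ≤ C * δ := by
    have h := Aux.headVec_norm_sq M w
    have h2 : ‖Aux.headVec M w‖ ^ 2 ≤ (C*δ)^2 := by rw [h]; exact hB2
    have := Real.sqrt_le_sqrt h2
    rwa [Real.sqrt_sq (norm_nonneg _), Real.sqrt_sq (by positivity)] at this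
  have hCδu : C * δ ≤ ‖u‖ := by
    have hδle : δ ≤ ‖u‖/(C+1) := le_trans (min_le_right _ _) (min_le_left _ _)
    calc C * δ ≤ C * (‖u‖/(C+1)) := mul_le_mul_of_nonneg_left hδle hCnn
      _ = ‖u‖ * (C/(C+1)) := by ring
      _ ≤ ‖u‖ * 1 := mul_le_mul_of_nonneg_left
          ((div_le_one (by linarith)).2 (by linarith)) (norm_nonneg _)
      _ = ‖u‖ := mul_one _
  have htu_hv : ‖u‖ - C * δ ≤ ‖Aux.headVec M tu‖ := by
    have h1 : ‖Aux.headVec M bu‖ ≤ ‖Aux.headVec M tu‖ + ‖Aux.headVec M w‖ := by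
      rw [hhead_sub]; exact norm_sub_le _ _
    rw [hbu_hv] at h1
    linarith
  have htuhead_sq : (‖u‖ - C*δ)^2 ≤ ∑ j ∈ Finset.range (M+1), ‖tu j‖ ^ 2 := by
    rw [← Aux.headVec_norm_sq]
    exact pow_le_pow_left₀ (by linarith) htu_hv 2
  -- tail of tu is small
  have htunorm : ‖tu‖ ≤ ‖u‖ := by
    calc ‖tu‖ ≤ ‖ContinuousLinearMap.adjoint T‖ * ‖u‖ :=
          (ContinuousLinearMap.adjoint T).le_opNorm u
      _ = ‖T‖ * ‖u‖ := by rw [ContinuousLinearMap.adjoint.norm_map]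
      _ ≤ 1 * ‖u‖ := mul_le_mul_of_nonneg_right hT.2 (norm_nonneg _)
      _ = ‖u‖ := one_mul _
  have htail_tu :
      ∑' j : ((Finset.range (M+1) : Set ℕ)ᶜ : Set ℕ), ‖tu (j:ℕ)‖ ^ 2
        ≤ 2*‖u‖*(C*δ) := by
    have hsplit := Aux.split_sq M tu
    have h2 : ‖tu‖ ^ 2 ≤ ‖u‖ ^ 2 := pow_le_pow_left₀ (norm_nonneg _) htunorm 2
    have hexp : (‖u‖ - C*δ)^2 = ‖u‖^2 - 2*‖u‖*(C*δ) + (C*δ)^2 := by ring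
    linarith [sq_nonneg (C*δ)]
  -- Step E : pointwise tail domination
  have hE : ∀ j, M < j → ‖dk j‖ * m ≤ ‖tu j‖ := by
    intro j hj
    have hTej := hT.1 (e j) (Aux.posVec_e j)
    -- dk j = conj ((T e j) k)
    have hdk2 : ‖dk j‖ = ((T (e j) : L2) k).re := by
      rw [hdkj j, hTBj j hj, ← inner_conj_symm, Aux.inner_e, RCLike.norm_conj]
      exact Aux.norm_of_nonneg_real (hTej k).2 (hTej k).1
    -- tu j as a real sum
    have htu2 : tu j = ((∑ i ∈ Finset.range (M+1),
        ((T (e j) : L2) i).re * (u i).re : ℝ) : ℂ) := by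
      rw [htuj j, Aux.inner_finsupp _ _ M husupp₁]
      push_cast
      refine Finset.sum_congr rfl fun i _ => ?_
      have h1 : ((T (e j) : L2) i) = ((((T (e j) : L2) i).re : ℝ) : ℂ) :=
        Complex.ext rfl (by simp [(hTej i).2])
      have h2 : u i = (((u i).re : ℝ) : ℂ) :=
        Complex.ext rfl (by simp [(hupos i).2])
      rw [h1, h2]
      simp [Complex.conj_ofReal]
    have hnn : ∀ i ∈ Finset.range (M+1),
        0 ≤ ((T (e j) : L2) i).re * (u i).re := fun i _ =>
      mul_nonneg (hTej i).1 (hupos i).1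
    have hksum : ((T (e j) : L2) k).re * (u k).re ≤
        ∑ i ∈ Finset.range (M+1), ((T (e j) : L2) i).re * (u i).re := by
      refine Finset.single_le_sum hnn ?_
      simp [Nat.lt_succ_iff, hk]
    have htunn : ‖tu j‖ = ∑ i ∈ Finset.range (M+1),
        ((T (e j) : L2) i).re * (u i).re := by
      rw [htu2, Complex.norm_real, Real.norm_eq_abs, abs_of_nonneg (Finset.sum_nonneg hnn)]
    rw [hdk2, htunn]
    calc ((T (e j) : L2) k).re * m ≤ ((T (e j) : L2) k).re * (u k).re :=
          mul_le_mul_of_nonneg_left (hmle k (by simp [Nat.lt_succ_iff, hk])) (hTej k).1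
      _ ≤ _ := hksum
  -- Step F : tail of dk
  have htail_dk :
      ∑' j : ((Finset.range (M+1) : Set ℕ)ᶜ : Set ℕ), ‖dk (j:ℕ)‖ ^ 2
        ≤ (2*‖u‖*(C*δ))/m^2 := by
    have hle : ∀ j : ((Finset.range (M+1) : Set ℕ)ᶜ : Set ℕ),
        ‖dk (j:ℕ)‖ ^ 2 ≤ ‖tu (j:ℕ)‖ ^ 2 / m ^ 2 := by
      intro j
      have hj : M < (j:ℕ) := by
        have := j.2
        simpa [Nat.lt_succ_iff, not_lt] using this
      have h1 : ‖dk (j:ℕ)‖ ≤ ‖tu (j:ℕ)‖ / m := by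
        rw [le_div_iff₀ hmpos]
        exact hE (j:ℕ) hj
      calc ‖dk (j:ℕ)‖ ^ 2 ≤ (‖tu (j:ℕ)‖ / m) ^ 2 :=
            pow_le_pow_left₀ (norm_nonneg _) h1 2
        _ = ‖tu (j:ℕ)‖ ^ 2 / m ^ 2 := div_pow _ _ _
    calc ∑' j : ((Finset.range (M+1) : Set ℕ)ᶜ : Set ℕ), ‖dk (j:ℕ)‖ ^ 2
        ≤ ∑' j : ((Finset.range (M+1) : Set ℕ)ᶜ : Set ℕ), ‖tu (j:ℕ)‖ ^ 2 / m ^ 2 :=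
          Summable.tsum_le_tsum hle ((Aux.summable_sq dk).subtype _)
            (((Aux.summable_sq tu).subtype _).div_const _)
      _ = (∑' j : ((Finset.range (M+1) : Set ℕ)ᶜ : Set ℕ), ‖tu (j:ℕ)‖ ^ 2) / m ^ 2 :=
          tsum_div_const
      _ ≤ (2*‖u‖*(C*δ))/m^2 := by
          exact div_le_div_of_nonneg_right htail_tu (by positivity) |>.trans le_rfl
  -- head of dk
  have hhead_dk : ∑ j ∈ Finset.range (M+1), ‖dk j‖ ^ 2 ≤ ((M:ℝ)+1)*δ^2 := by
    calc ∑ j ∈ Finset.range (M+1), ‖dk j‖ ^ 2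
        ≤ ∑ _j ∈ Finset.range (M+1), δ ^ 2 := by
          refine Finset.sum_le_sum fun j hj => ?_
          have hjM : j ≤ M := by simpa [Nat.lt_succ_iff] using hj
          have h1 : ‖dk j‖ ≤ δ := by
            rw [hdkj j, ← inner_conj_symm, Aux.inner_e, RCLike.norm_conj]
            exact hcorner' k j hk hjM
          exact pow_le_pow_left₀ (norm_nonneg _) h1 2
      _ = ((M:ℝ)+1) * δ^2 := by
          rw [Finset.sum_const, Finset.card_range, nsmul_eq_mul]; push_cast; ring
  -- conclusion
  have hfin : ‖dk‖ ^ 2 ≤ ((M:ℝ)+1)*δ^2 + (2*‖u‖*(C*δ))/m^2 := by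
    rw [Aux.split_sq M dk]
    exact add_le_add hhead_dk htail_dk
  have hδ1 : δ ≤ 1 := min_le_left _ _
  have hδ3 : δ ≤ ε^2/(K+1) := le_trans (min_le_right _ _) (min_le_right _ _)
  have hsq : ‖dk‖ ^ 2 < ε ^ 2 := by
    have hδsq : δ ^ 2 ≤ δ := by nlinarith [mul_le_mul_of_nonneg_right hδ1 hδpos.le]
    have e1 : ((M:ℝ)+1)*δ^2 ≤ ((M:ℝ)+1)*δ :=
      mul_le_mul_of_nonneg_left hδsq (by positivity)
    have e2 : (2*‖u‖*(C*δ))/m^2 = (2*‖u‖*C/m^2)*δ := by ring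
    have e3 : ((M:ℝ)+1)*δ + (2*‖u‖*C/m^2)*δ = K*δ := by rw [hKdef]; ring
    have e4 : K*δ ≤ K*(ε^2/(K+1)) := mul_le_mul_of_nonneg_left hδ3 hKpos.le
    have e5 : K*(ε^2/(K+1)) < ε^2 := by
      rw [show K*(ε^2/(K+1)) = ε^2*(K/(K+1)) by ring]
      have h1 : K/(K+1) < 1 := (div_lt_one (by linarith)).2 (by linarith)
      calc ε^2*(K/(K+1)) < ε^2*1 := by
            exact mul_lt_mul_of_pos_left h1 (by positivity)
        _ = ε^2 := mul_one _
    calc ‖dk‖ ^ 2 ≤ ((M:ℝ)+1)*δ^2 + (2*‖u‖*(C*δ))/m^2 := hfin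
      _ ≤ ((M:ℝ)+1)*δ + (2*‖u‖*C/m^2)*δ := by rw [e2] at *; linarith
      _ = K*δ := e3
      _ ≤ K*(ε^2/(K+1)) := e4
      _ < ε^2 := e5
  exact lt_of_pow_lt_pow_left₀ 2 hε.le hsq
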